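/- Let p be an odd prime and define integer sequences (p_n) and (q_n) by p_{−1} = 1, p₀ = p−1, q_{−1} = 0, q₀ = 1 and the common recurrence u_{n+1} = (p−1)·u_n + p·u_{n−1} for n ≥ 0. Then for every n ≥ 0 the p-adic absolute value satisfies |p_n/q_n + 1|_p = p^{−(n+1)}; consequently the convergents p_n/q_n of the stationary Schneider continued fraction (p−1) + p/((p−1) + p/((p−1) + p/…)) converge in ℚ_p to −1. -/

import Mathlib

lemma padicNorm_pow_aux (p : ℕ) [Fact p.Prime] (n : ℕ) :
    padicNorm p ((p : ℚ) ^ n) = (p : ℚ) ^ (-(n : ℤ)) := by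
  induction n with
  | zero => simp [padicNorm.one]
  | succ k ih =>
    rw [pow_succ, padicNorm.mul, ih, padicNorm.padicNorm_p_of_prime]
    have hp : (0 : ℚ) < p := by exact_mod_cast (Fact.out : p.Prime).pos
    rw [show (-(((k : ℕ) + 1 : ℕ) : ℤ)) = -(k : ℤ) + (-1) by push_cast; ring,
      zpow_add₀ (ne_of_gt hp)]
    simp

/-- For the convergents `p_n/q_n` of the stationary Schneider continued fraction
`(p−1) + p/((p−1) + p/(…))`, the `p`-adic absolute value satisfies
`|p_n/q_n + 1|_p = p^{−(n+1)}`; consequently the convergents tend to `−1`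
in `ℚ_p`. -/
theorem stmt_15 (p : ℕ) [hp : Fact p.Prime] (hodd : Odd p)
    (P Q : ℕ → ℤ)
    (hP0 : P 0 = (p : ℤ) - 1) (hQ0 : Q 0 = 1)
    (hP1 : P 1 = ((p : ℤ) - 1) * P 0 + (p : ℤ) * 1)
    (hQ1 : Q 1 = ((p : ℤ) - 1) * Q 0 + (p : ℤ) * 0)
    (hPrec : ∀ n : ℕ, 1 ≤ n → P (n + 1) = ((p : ℤ) - 1) * P n + (p : ℤ) * P (n - 1))
    (hQrec : ∀ n : ℕ, 1 ≤ n → Q (n + 1) = ((p : ℤ) - 1) * Q n + (p : ℤ) * Q (n - 1)) :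
    (∀ n : ℕ, padicNorm p ((P n : ℚ) / (Q n : ℚ) + 1) = (p : ℚ) ^ (-((n : ℤ) + 1))) ∧
    Filter.Tendsto (fun n : ℕ => ((P n : ℚ_[p]) / (Q n : ℚ_[p]))) Filter.atTop
      (nhds (-1)) := by
  have hp1 : 1 < p := hp.out.one_lt
  -- key identity: P n + Q n = p^(n+1)
  have hsum : ∀ n : ℕ, P n + Q n = (p : ℤ) ^ (n + 1) := by
    have h : ∀ n : ℕ, P n + Q n = (p : ℤ) ^ (n + 1) ∧
        P (n + 1) + Q (n + 1) = (p : ℤ) ^ (n + 2) := by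
      intro n
      induction n with
      | zero =>
        constructor
        · rw [hP0, hQ0]; ring
        · rw [hP1, hQ1, hP0, hQ0]; ring
      | succ k ih =>
        refine ⟨ih.2, ?_⟩
        rw [hPrec (k + 1) (by omega), hQrec (k + 1) (by omega)]
        simp only [Nat.add_sub_cancel]
        have h1 := ih.1
        have h2 := ih.2
        have : ((p : ℤ) - 1) * (P (k + 1) + Q (k + 1)) + (p : ℤ) * (P k + Q k)
            = (p : ℤ) ^ (k + 3) := by
          rw [h1, h2]; ring
        linarith [this]
    exact fun n => (h n).1
  -- Q n is not divisible by p
  have hQmod : ∀ n : ℕ, (Q n : ZMod p) = (-1) ^ n := by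
    have h : ∀ n : ℕ, (Q n : ZMod p) = (-1) ^ n ∧ (Q (n + 1) : ZMod p) = (-1) ^ (n + 1) := by
      intro n
      induction n with
      | zero =>
        constructor
        · rw [hQ0]; simp
        · rw [hQ1, hQ0]; push_cast; simp [ZMod.natCast_self]
      | succ k ih =>
        refine ⟨ih.2, ?_⟩
        rw [hQrec (k + 1) (by omega)]
        simp only [Nat.add_sub_cancel]
        push_cast
        rw [ih.1, ih.2]
        simp
        ring
    exact fun n => (h n).1
  have hQnd : ∀ n : ℕ, ¬ (p : ℤ) ∣ Q n := by
    intro n hdvd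
    have h0 : (Q n : ZMod p) = 0 := by
      rcases hdvd with ⟨c, hc⟩
      rw [hc]; push_cast; simp
    rw [hQmod n] at h0
    exact pow_ne_zero n (neg_ne_zero.mpr one_ne_zero) h0
  have hQne : ∀ n : ℕ, (Q n : ℚ) ≠ 0 := by
    intro n h
    have : Q n = 0 := by exact_mod_cast h
    exact hQnd n (this ▸ dvd_zero _)
  -- the norm formula
  have hnorm : ∀ n : ℕ, padicNorm p ((P n : ℚ) / (Q n : ℚ) + 1) = (p : ℚ) ^ (-((n : ℤ) + 1)) := by
    intro n
    have hs : (P n : ℚ) + (Q n : ℚ) = (p : ℚ) ^ (n + 1) := by exact_mod_cast hsum n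
    have heq : (P n : ℚ) / (Q n : ℚ) + 1 = (p : ℚ) ^ (n + 1) / (Q n : ℚ) := by
      rw [eq_div_iff (hQne n), add_mul, one_mul, div_mul_cancel₀ _ (hQne n), hs]
    rw [heq, padicNorm.div, padicNorm_pow_aux, (padicNorm.int_eq_one_iff (Q n)).mpr (hQnd n)]
    rw [div_one]
    congr 1
  refine ⟨hnorm, ?_⟩
  -- convergence in ℚ_p
  rw [tendsto_iff_norm_sub_tendsto_zero]
  have hnormE : ∀ n : ℕ, ‖(P n : ℚ_[p]) / (Q n : ℚ_[p]) - (-1)‖ = (p : ℝ) ^ (-((n : ℤ) + 1)) := by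
    intro n
    have : (P n : ℚ_[p]) / (Q n : ℚ_[p]) - (-1) = (((P n : ℚ) / (Q n : ℚ) + 1 : ℚ) : ℚ_[p]) := by
      push_cast
      ring
    rw [this, Padic.eq_padicNorm, hnorm n]
    push_cast
    ring
  simp only [hnormE]
  have hplt : (p : ℝ)⁻¹ < 1 := by
    rw [inv_lt_one_iff₀]
    right
    exact_mod_cast hp1
  have hpnn : (0 : ℝ) ≤ (p : ℝ)⁻¹ := by positivity
  have h0 : Filter.Tendsto (fun n : ℕ => ((p : ℝ)⁻¹) ^ (n + 1)) Filter.atTop (nhds 0) :=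
    (tendsto_pow_atTop_nhds_zero_of_lt_one hpnn hplt).comp (Filter.tendsto_add_atTop_nat 1)
  convert h0 using 2 with n
  rw [zpow_neg, inv_pow, inv_inj, show ((n : ℤ) + 1) = ((n + 1 : ℕ) : ℤ) by push_cast; ring,
    zpow_natCast]
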